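/- For all real a ≥ b ≥ 0 and x ≥ 0, 2ax(1 + e^{-x}) - 4b(1 - e^{-x}) ≥ 2ax³/(6 + 4x + x²). -/

import Mathlib

lemma exp_key_aux (x : ℝ) (hx : 0 ≤ x) :
    0 ≤ (x ^ 2 + 4 * x + 6) * Real.exp (-x) + 2 * x - 6 := by
  set f : ℝ → ℝ := fun y => (y ^ 2 + 4 * y + 6) * Real.exp (-y) + 2 * y - 6 with hf
  have hmono : MonotoneOn f (Set.Ici (0 : ℝ)) := by
    apply monotoneOn_of_deriv_nonneg (convex_Ici 0)
    · fun_prop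
    · intro y hy
      apply DifferentiableAt.differentiableWithinAt
      fun_prop
    · intro y hy
      rw [interior_Ici] at hy
      have hy0 : 0 ≤ y := le_of_lt hy
      have h1 : HasDerivAt (fun y : ℝ => Real.exp (-y)) (-Real.exp (-y)) y := by
        simpa [Function.comp_def] using (Real.hasDerivAt_exp (-y)).comp y (hasDerivAt_neg y)
      have h2 : HasDerivAt (fun y : ℝ => y ^ 2 + 4 * y + 6) (2 * y + 4) y := by
        have := ((hasDerivAt_pow 2 y).add ((hasDerivAt_id y).const_mul 4)).add_const 6
        simpa using this
      have hd : HasDerivAt f ((2 * y + 4) * Real.exp (-y) +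
          (y ^ 2 + 4 * y + 6) * (-Real.exp (-y)) + 2 * 1) y := by
        rw [hf]
        exact ((h2.mul h1).add ((hasDerivAt_id y).const_mul 2)).sub_const 6
      rw [hd.deriv]
      have hq : 1 + y + y ^ 2 / 2 ≤ Real.exp y := Real.quadratic_le_exp_of_nonneg hy0
      have hE : Real.exp (-y) * Real.exp y = 1 := by
        rw [← Real.exp_add]; simp
      nlinarith [mul_nonneg (Real.exp_pos (-y)).le (sub_nonneg.mpr hq), hE]
  have h0 : f 0 = 0 := by simp [hf]
  have := hmono (Set.self_mem_Ici) (Set.mem_Ici.mpr hx) hx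
  rw [h0] at this
  exact this

theorem exp_elementary_bounds_four (a b x : ℝ) (hab : b ≤ a) (hb : 0 ≤ b) (hx : 0 ≤ x) :
    2 * a * x ^ 3 / (6 + 4 * x + x ^ 2) ≤
      2 * a * x * (1 + Real.exp (-x)) - 4 * b * (1 - Real.exp (-x)) := by
  have hD : (0 : ℝ) < 6 + 4 * x + x ^ 2 := by nlinarith
  have hkey := exp_key_aux x hx
  have ht1 : Real.exp (-x) ≤ 1 := Real.exp_le_one_iff.mpr (by linarith)
  have ha : 0 ≤ a := le_trans hb hab
  rw [div_le_iff₀ hD]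
  nlinarith [mul_nonneg ha (mul_nonneg (by linarith : (0:ℝ) ≤ x + 2) hkey),
    mul_nonneg (mul_nonneg (sub_nonneg.mpr hab) (sub_nonneg.mpr ht1)) hD.le]
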